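/- With λᵢ(R,θ) defined as λ₀ = 1/4 + R cos θ/2 + R² cos(2θ)/4, λ₁ = 1/4 + R sin θ/2 − R² cos(2θ)/4, λ₂ = 1/4 − R sin θ/2 − R² cos(2θ)/4, λ₃ = 1/4 − R cos θ/2 + R² cos(2θ)/4, all positive, and H({λᵢ}) = −Σᵢ λᵢ log₂ λᵢ, h the binary entropy, the partial derivative with respect to R of h(λ₀+λ₁) − H({λ₀,λ₁,λ₂,λ₃}) equals log₂(λ₀/λ₁)·(cos θ − sin θ)/2, and this is nonnegative whenever 0 ≤ θ ≤ π/4 and λ₀ ≥ λ₁ > 0. -/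

import Mathlib

open Real

lemma hasDerivAt_mul_logb {f : ℝ → ℝ} {f' x : ℝ} (hf : HasDerivAt f f' x) (hx : f x ≠ 0) :
    HasDerivAt (fun t => f t * Real.logb 2 (f t))
      ((Real.logb 2 (f x) + 1 / Real.log 2) * f') x := by
  have hlog : HasDerivAt (fun t => Real.log (f t)) ((f x)⁻¹ * f') x :=
    (Real.hasDerivAt_log hx).comp x hf
  have h := hf.mul (hlog.div_const (Real.log 2))
  simp only [Real.logb]
  refine h.congr_deriv ?_
  have h2 : Real.log 2 ≠ 0 := ne_of_gt (Real.log_pos (by norm_num))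
  field_simp

/-- Binary Shannon entropy (base 2). -/
noncomputable def binEnt (p : ℝ) : ℝ :=
  -(p * Real.logb 2 p) - (1 - p) * Real.logb 2 (1 - p)

/-- Eigenvalues of the Bell-diagonal state with `δ = R²cos(2θ)/4`. -/
noncomputable def lam0 (θ r : ℝ) : ℝ := 1 / 4 + r * Real.cos θ / 2 + r ^ 2 * Real.cos (2 * θ) / 4
noncomputable def lam1 (θ r : ℝ) : ℝ := 1 / 4 + r * Real.sin θ / 2 - r ^ 2 * Real.cos (2 * θ) / 4
noncomputable def lam2 (θ r : ℝ) : ℝ := 1 / 4 - r * Real.sin θ / 2 - r ^ 2 * Real.cos (2 * θ) / 4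
noncomputable def lam3 (θ r : ℝ) : ℝ := 1 / 4 - r * Real.cos θ / 2 + r ^ 2 * Real.cos (2 * θ) / 4

/-- Shannon entropy (base 2) of the four eigenvalues. -/
noncomputable def entFour (θ r : ℝ) : ℝ :=
  -(lam0 θ r * Real.logb 2 (lam0 θ r)) - lam1 θ r * Real.logb 2 (lam1 θ r)
    - lam2 θ r * Real.logb 2 (lam2 θ r) - lam3 θ r * Real.logb 2 (lam3 θ r)

/-- the `R`-derivative of `h(λ₀+λ₁) − H({λᵢ})` equals
`log₂(λ₀/λ₁)·(cos θ − sin θ)/2`, and this is nonnegative for `0 ≤ θ ≤ π/4`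
and `λ₀ ≥ λ₁ > 0`. -/
theorem deriv_binEnt_sub_entFour (R θ : ℝ)
    (hR : 1 / Real.sqrt 2 < R) (hR1 : R ≤ 1)
    (hθ0 : 0 ≤ θ) (hθ : θ ≤ π / 4)
    (h0 : 0 < lam0 θ R ∧ lam0 θ R < 1) (h1 : 0 < lam1 θ R ∧ lam1 θ R < 1)
    (h2 : 0 < lam2 θ R ∧ lam2 θ R < 1) (h3 : 0 < lam3 θ R ∧ lam3 θ R < 1)
    (h01 : lam1 θ R ≤ lam0 θ R) :
    HasDerivAt (fun r => binEnt (lam0 θ r + lam1 θ r) - entFour θ r)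
        (Real.logb 2 (lam0 θ R / lam1 θ R) * (Real.cos θ - Real.sin θ) / 2) R ∧
    0 ≤ Real.logb 2 (lam0 θ R / lam1 θ R) * (Real.cos θ - Real.sin θ) / 2 := by
  obtain ⟨h0p, h0lt⟩ := h0
  obtain ⟨h1p, h1lt⟩ := h1
  obtain ⟨h2p, h2lt⟩ := h2
  obtain ⟨h3p, h3lt⟩ := h3
  have hcs : Real.sin θ ≤ Real.cos θ := by
    have hmem : θ + π / 4 ∈ Set.Icc (-(π / 2)) (π / 2) := by
      constructor
      · nlinarith [Real.pi_pos]
      · nlinarith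
    have hcos := Real.cos_nonneg_of_mem_Icc hmem
    rw [Real.cos_add, Real.cos_pi_div_four, Real.sin_pi_div_four] at hcos
    nlinarith [Real.sq_sqrt (by norm_num : (2:ℝ) ≥ 0), Real.sqrt_pos.mpr (by norm_num : (0:ℝ) < 2)]
  -- derivatives of the eigenvalues
  have hid : HasDerivAt (fun r : ℝ => r) 1 R := hasDerivAt_id R
  have hsq : HasDerivAt (fun r : ℝ => r ^ 2) (2 * R) R := by simpa using hasDerivAt_pow 2 R
  have d0 : HasDerivAt (lam0 θ) (Real.cos θ / 2 + R * Real.cos (2 * θ) / 2) R := by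
    unfold lam0
    refine ((((hid.mul_const (Real.cos θ)).div_const 2).const_add (1/4)).add
      ((hsq.mul_const (Real.cos (2*θ))).div_const 4)).congr_deriv ?_
    ring
  have d1 : HasDerivAt (lam1 θ) (Real.sin θ / 2 - R * Real.cos (2 * θ) / 2) R := by
    unfold lam1
    refine ((((hid.mul_const (Real.sin θ)).div_const 2).const_add (1/4)).sub
      ((hsq.mul_const (Real.cos (2*θ))).div_const 4)).congr_deriv ?_
    ring
  have d2 : HasDerivAt (lam2 θ) (-(Real.sin θ / 2) - R * Real.cos (2 * θ) / 2) R := by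
    unfold lam2
    refine ((((hid.mul_const (Real.sin θ)).div_const 2).const_sub (1/4)).sub
      ((hsq.mul_const (Real.cos (2*θ))).div_const 4)).congr_deriv ?_
    ring
  have d3 : HasDerivAt (lam3 θ) (-(Real.cos θ / 2) + R * Real.cos (2 * θ) / 2) R := by
    unfold lam3
    refine ((((hid.mul_const (Real.cos θ)).div_const 2).const_sub (1/4)).add
      ((hsq.mul_const (Real.cos (2*θ))).div_const 4)).congr_deriv ?_
    ring
  -- sum of eigenvalues is 1
  have hsum : ∀ r, lam2 θ r + lam3 θ r = 1 - (lam0 θ r + lam1 θ r) := by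
    intro r; unfold lam0 lam1 lam2 lam3; ring
  have hPpos : 0 < lam0 θ R + lam1 θ R := by linarith
  have hQpos : 0 < 1 - (lam0 θ R + lam1 θ R) := by
    have := hsum R; linarith
  -- pieces
  have dP : HasDerivAt (fun r => lam0 θ r + lam1 θ r)
      ((Real.cos θ / 2 + R * Real.cos (2 * θ) / 2) + (Real.sin θ / 2 - R * Real.cos (2 * θ) / 2)) R :=
    d0.add d1
  have dQ : HasDerivAt (fun r => 1 - (lam0 θ r + lam1 θ r))
      (-((Real.cos θ / 2 + R * Real.cos (2 * θ) / 2) + (Real.sin θ / 2 - R * Real.cos (2 * θ) / 2))) R :=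
    dP.const_sub 1
  have tP := hasDerivAt_mul_logb dP (ne_of_gt hPpos)
  have tQ := hasDerivAt_mul_logb dQ (ne_of_gt hQpos)
  have t0 := hasDerivAt_mul_logb d0 (ne_of_gt h0p)
  have t1 := hasDerivAt_mul_logb d1 (ne_of_gt h1p)
  have t2 := hasDerivAt_mul_logb d2 (ne_of_gt h2p)
  have t3 := hasDerivAt_mul_logb d3 (ne_of_gt h3p)
  -- key multiplicative identity
  have hmul : lam0 θ R * lam3 θ R = lam1 θ R * lam2 θ R := by
    have hc2 : Real.cos (2 * θ) = Real.cos θ ^ 2 - Real.sin θ ^ 2 := by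
      have := Real.sin_sq_add_cos_sq θ
      rw [Real.cos_two_mul]; linarith
    unfold lam0 lam1 lam2 lam3
    rw [hc2]; ring
  have rel1 : Real.logb 2 (lam0 θ R) + Real.logb 2 (lam3 θ R)
      = Real.logb 2 (lam1 θ R) + Real.logb 2 (lam2 θ R) := by
    rw [← Real.logb_mul (ne_of_gt h0p) (ne_of_gt h3p),
      ← Real.logb_mul (ne_of_gt h1p) (ne_of_gt h2p), hmul]
  have hmul2 : lam0 θ R * (lam2 θ R + lam3 θ R) = lam2 θ R * (lam0 θ R + lam1 θ R) := by
    nlinarith [hmul]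
  have rel2 : Real.logb 2 (lam0 θ R) + Real.logb 2 (lam2 θ R + lam3 θ R)
      = Real.logb 2 (lam2 θ R) + Real.logb 2 (lam0 θ R + lam1 θ R) := by
    rw [← Real.logb_mul (ne_of_gt h0p) (by positivity),
      ← Real.logb_mul (ne_of_gt h2p) (ne_of_gt hPpos), hmul2]
  have hQlog : Real.logb 2 (1 - (lam0 θ R + lam1 θ R)) = Real.logb 2 (lam2 θ R + lam3 θ R) := by
    rw [hsum R]
  have hdivlog : Real.logb 2 (lam0 θ R / lam1 θ R)
      = Real.logb 2 (lam0 θ R) - Real.logb 2 (lam1 θ R) :=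
    Real.logb_div (ne_of_gt h0p) (ne_of_gt h1p)
  constructor
  · have hD := ((tP.neg.sub tQ).sub (((t0.neg.sub t1).sub t2).sub t3))
    have hfun : (fun r => binEnt (lam0 θ r + lam1 θ r) - entFour θ r)
        = fun r => (-(((lam0 θ r + lam1 θ r)) * Real.logb 2 (lam0 θ r + lam1 θ r))
            - (1 - (lam0 θ r + lam1 θ r)) * Real.logb 2 (1 - (lam0 θ r + lam1 θ r)))
          - ((-(lam0 θ r * Real.logb 2 (lam0 θ r)) - lam1 θ r * Real.logb 2 (lam1 θ r))
            - lam2 θ r * Real.logb 2 (lam2 θ r) - lam3 θ r * Real.logb 2 (lam3 θ r)) := by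
      funext r; unfold binEnt entFour; ring
    rw [hfun]
    refine hD.congr_deriv ?_; symm
    rw [hdivlog, hQlog]
    linear_combination (Real.cos θ / 2 - R * Real.cos (2 * θ) / 2) * rel1
      - ((Real.cos θ + Real.sin θ) / 2) * rel2
  · apply div_nonneg _ (by norm_num)
    apply mul_nonneg _ (by linarith)
    apply Real.logb_nonneg (by norm_num)
    exact (one_le_div h1p).mpr h01
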